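/- Let G be a finite simple graph without isolated vertices and let a > 1 be a real number. Then χ_{-a}(G) < ISD_a(G) ≤ 2^{a-1}·χ_{-a}(G), and equality holds in the upper bound if and only if each connected component of G is regular. -/

import Mathlib

open Finset Real

lemma pow_add_lt {x y a : ℝ} (hx : 0 < x) (hy : 0 < y) (ha : 1 < a) :
    x ^ a + y ^ a < (x + y) ^ a := by
  have h1 : 0 < a - 1 := by linarith
  have hxy : 0 < x + y := by linarith
  have ex : x ^ a = x * x ^ (a - 1) := by
    rw [← Real.rpow_one_add' (by positivity) (by linarith)]; ring_nf
  have ey : y ^ a = y * y ^ (a - 1) := by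
    rw [← Real.rpow_one_add' (by positivity) (by linarith)]; ring_nf
  have exy : (x + y) ^ a = (x + y) * (x + y) ^ (a - 1) := by
    rw [← Real.rpow_one_add' (by positivity) (by linarith)]; ring_nf
  have hx' : x ^ (a-1) < (x+y) ^ (a-1) := rpow_lt_rpow hx.le (by linarith) h1
  have hy' : y ^ (a-1) < (x+y) ^ (a-1) := rpow_lt_rpow hy.le (by linarith) h1
  calc x ^ a + y ^ a = x * x ^ (a-1) + y * y ^ (a-1) := by rw [ex, ey]
    _ < x * (x+y) ^ (a-1) + y * (x+y) ^ (a-1) :=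
        add_lt_add (by nlinarith) (by nlinarith)
    _ = (x + y) * (x+y) ^ (a-1) := by ring
    _ = (x + y) ^ a := exy.symm

lemma pow_le_two_pow {x y a : ℝ} (hx : 0 < x) (hy : 0 < y) (ha : 1 < a) :
    (x + y) ^ a ≤ 2 ^ (a - 1) * (x ^ a + y ^ a) := by
  have hc := (strictConvexOn_rpow ha).convexOn
  have h := hc.2 (Set.mem_Ici.2 hx.le) (Set.mem_Ici.2 hy.le)
    (by norm_num : (0:ℝ) ≤ 1/2) (by norm_num : (0:ℝ) ≤ 1/2) (by norm_num)
  simp only [smul_eq_mul] at h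
  -- h : (1/2*x + 1/2*y)^a ≤ 1/2 * x^a + 1/2 * y^a
  have key : ((x+y)/2) ^ a = (x+y) ^ a / 2 ^ a := Real.div_rpow (by linarith) (by norm_num) a
  have h2 : (x+y) ^ a / 2 ^ a ≤ 1/2 * x^a + 1/2 * y^a := by
    rw [← key]; convert h using 2; rfl; ring
  have hpos : (0:ℝ) < 2 ^ a := by positivity
  have e2 : (2:ℝ) ^ a = 2 * 2 ^ (a-1) := by
    rw [← Real.rpow_one_add' (by norm_num) (by linarith)]; ring_nf
  rw [div_le_iff₀ hpos] at h2
  calc (x+y)^a ≤ (1/2 * x^a + 1/2 * y^a) * 2^a := h2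
    _ = 2 ^ (a-1) * (x^a + y^a) := by rw [e2]; ring

lemma pow_lt_two_pow {x y a : ℝ} (hx : 0 < x) (hy : 0 < y) (ha : 1 < a) (hne : x ≠ y) :
    (x + y) ^ a < 2 ^ (a - 1) * (x ^ a + y ^ a) := by
  have h := (strictConvexOn_rpow ha).2 (Set.mem_Ici.2 hx.le) (Set.mem_Ici.2 hy.le) hne
    (by norm_num : (0:ℝ) < 1/2) (by norm_num : (0:ℝ) < 1/2) (by norm_num)
  simp only [smul_eq_mul] at h
  have key : ((x+y)/2) ^ a = (x+y) ^ a / 2 ^ a := Real.div_rpow (by linarith) (by norm_num) a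
  have h2 : (x+y) ^ a / 2 ^ a < 1/2 * x^a + 1/2 * y^a := by
    rw [← key]; convert h using 2; rfl; ring
  have hpos : (0:ℝ) < 2 ^ a := by positivity
  have e2 : (2:ℝ) ^ a = 2 * 2 ^ (a-1) := by
    rw [← Real.rpow_one_add' (by norm_num) (by linarith)]; ring_nf
  rw [div_lt_iff₀ hpos] at h2
  calc (x+y)^a < (1/2 * x^a + 1/2 * y^a) * 2^a := h2
    _ = 2 ^ (a-1) * (x^a + y^a) := by rw [e2]; ring

lemma pow_eq_two_pow {x a : ℝ} (hx : 0 < x) (ha : 1 < a) :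
    (x + x) ^ a = 2 ^ (a - 1) * (x ^ a + x ^ a) := by
  have : (x + x) = 2 * x := by ring
  rw [this, Real.mul_rpow (by norm_num) hx.le]
  have e2 : (2:ℝ) ^ a = 2 * 2 ^ (a-1) := by
    rw [← Real.rpow_one_add' (by norm_num) (by linarith)]; ring_nf
  rw [e2]; ring

/-- The variable inverse sum deg index
`ISD_a(G) = Σ_{uv ∈ E(G)} 1/(d_u^a + d_v^a)`. -/
noncomputable def ISD {V : Type*} [Fintype V] [DecidableEq V] (G : SimpleGraph V)
    [DecidableRel G.Adj] (a : ℝ) : ℝ :=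
  ∑ e ∈ G.edgeFinset,
    Sym2.lift ⟨fun u v => 1 / ((G.degree u : ℝ) ^ a + (G.degree v : ℝ) ^ a),
      fun u v => by simp [add_comm]⟩ e

/-- The general sum-connectivity index `χ_α(G) = Σ_{uv ∈ E(G)} (d_u + d_v)^α`. -/
noncomputable def sumConn {V : Type*} [Fintype V] [DecidableEq V] (G : SimpleGraph V)
    [DecidableRel G.Adj] (α : ℝ) : ℝ :=
  ∑ e ∈ G.edgeFinset,
    Sym2.lift ⟨fun u v => ((G.degree u : ℝ) + (G.degree v : ℝ)) ^ α,
      fun u v => by simp [add_comm]⟩ e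

theorem stmt_6 {V : Type*} [Fintype V] [DecidableEq V] [Nonempty V] (G : SimpleGraph V)
    [DecidableRel G.Adj] (hiso : ∀ v : V, 0 < G.degree v) (a : ℝ) (ha : 1 < a) :
    ((sumConn G (-a) < ISD G a ∧ ISD G a ≤ 2 ^ (a - 1) * sumConn G (-a)) ∧
    (ISD G a = 2 ^ (a - 1) * sumConn G (-a) ↔ ∀ u v : V, G.Reachable u v → G.degree u = G.degree v)) := by
  classical
  set fI : Sym2 V → ℝ :=
    Sym2.lift ⟨fun u v => 1 / ((G.degree u : ℝ) ^ a + (G.degree v : ℝ) ^ a),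
      fun u v => by simp [add_comm]⟩ with hfI
  set fC : Sym2 V → ℝ :=
    Sym2.lift ⟨fun u v => ((G.degree u : ℝ) + (G.degree v : ℝ)) ^ (-a),
      fun u v => by simp [add_comm]⟩ with hfC
  have hISD : ISD G a = ∑ e ∈ G.edgeFinset, fI e := rfl
  have hSC : sumConn G (-a) = ∑ e ∈ G.edgeFinset, fC e := rfl
  have hdeg : ∀ v : V, (0:ℝ) < (G.degree v : ℝ) := fun v => by exact_mod_cast hiso v
  -- per-edge facts
  have claim1 : ∀ e ∈ G.edgeFinset, fC e < fI e := by
    intro e he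
    induction e with
    | h u v =>
      simp only [hfI, hfC, Sym2.lift_mk]
      set x := (G.degree u : ℝ); set y := (G.degree v : ℝ)
      have hx := hdeg u; have hy := hdeg v
      rw [Real.rpow_neg (by positivity), one_div]
      exact inv_strictAnti₀ (by positivity) (pow_add_lt hx hy ha)
  have claim2 : ∀ e ∈ G.edgeFinset, fI e ≤ 2 ^ (a - 1) * fC e := by
    intro e he
    induction e with
    | h u v =>
      simp only [hfI, hfC, Sym2.lift_mk]
      set x := (G.degree u : ℝ); set y := (G.degree v : ℝ)
      have hx := hdeg u; have hy := hdeg v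
      rw [Real.rpow_neg (by positivity), ← one_div, mul_one_div]
      rw [div_le_div_iff₀ (by positivity) (by positivity)]
      calc 1 * (x + y) ^ a = (x + y) ^ a := one_mul _
        _ ≤ 2 ^ (a - 1) * (x ^ a + y ^ a) := pow_le_two_pow hx hy ha
  have claim3 : ∀ u v : V, G.Adj u v →
      (fI s(u, v) = 2 ^ (a - 1) * fC s(u, v) ↔ G.degree u = G.degree v) := by
    intro u v _
    simp only [hfI, hfC, Sym2.lift_mk]
    have hx := hdeg u; have hy := hdeg v
    rw [Real.rpow_neg (by positivity), ← one_div, mul_one_div]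
    rw [div_eq_div_iff (by positivity) (by positivity), one_mul]
    rw [← Nat.cast_inj (R := ℝ)]
    constructor
    · intro h
      by_contra hne'
      exact absurd h (ne_of_lt (pow_lt_two_pow hx hy ha hne'))
    · intro h
      rw [h]; exact pow_eq_two_pow hy ha
  -- edge set nonempty
  have hne : G.edgeFinset.Nonempty := by
    obtain ⟨v⟩ := ‹Nonempty V›
    have : (G.neighborFinset v).Nonempty := Finset.card_pos.1 (hiso v)
    obtain ⟨w, hw⟩ := this
    refine ⟨s(v, w), ?_⟩
    rw [SimpleGraph.mem_edgeFinset, SimpleGraph.mem_edgeSet]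
    exact (SimpleGraph.mem_neighborFinset _ _ _).1 hw
  have hmul : 2 ^ (a - 1) * sumConn G (-a) = ∑ e ∈ G.edgeFinset, 2 ^ (a - 1) * fC e := by
    rw [hSC, Finset.mul_sum]
  refine ⟨⟨?_, ?_⟩, ?_⟩
  · rw [hISD, hSC]; exact Finset.sum_lt_sum_of_nonempty hne claim1
  · rw [hISD, hmul]; exact Finset.sum_le_sum claim2
  · rw [hISD, hmul, Finset.sum_eq_sum_iff_of_le claim2]
    constructor
    · intro h u v hr
      obtain ⟨w⟩ := hr
      induction w with
      | nil => rfl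
      | cons hadj p ih =>
        refine ((claim3 _ _ hadj).1 (h _ ?_)).trans ih
        rw [SimpleGraph.mem_edgeFinset, SimpleGraph.mem_edgeSet]; exact hadj
    · intro h e he
      induction e with
      | h u v =>
        have hadj : G.Adj u v := by
          rw [SimpleGraph.mem_edgeFinset, SimpleGraph.mem_edgeSet] at he; exact he
        exact (claim3 u v hadj).2 (h u v hadj.reachable)
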